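/- Suppose $\sigma$ is a $K$-algebra endomorphism of $L$ such that $\sigma(y_n) = \frac{P_{n-2}}{P_{n-1}} \cdot \frac{F_{n-1}}{y_{n-1}}$ for all $n \in \mathbb{Z}/m\mathbb{Z}$. Then $\sigma(z_n) = z_n$ for every $n \in \mathbb{Z}/m\mathbb{Z}$; equivalently, the identity $\frac{P_{n-2} F_{n-1}}{P_{n-1} y_{n-1}} + \frac{P_n\, y_n}{P_{n-1}} = y_n + \frac{F_n}{y_{n+1}}$ holds in $L$. -/

import Mathlib

/- Setting: `Lm K m` is the field of fractions of the (Laurent) polynomial ring over a field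
`K` in commuting variables `yv n` indexed by `n : ZMod m`, with fixed scalars `F n : K`. -/

noncomputable section

variable (K : Type) [Field K] (m : ℕ) [NeZero m]

/-- The ambient field `L`. -/
abbrev Lm := FractionRing (MvPolynomial (ZMod m) K)

/-- The variable `y_n`. -/
def yv (n : ZMod m) : Lm K m :=
  algebraMap (MvPolynomial (ZMod m) K) (Lm K m) (MvPolynomial.X n)

variable (F : ZMod m → K)

/-- The scalar `F_n` viewed inside `L`. -/
def Fc (n : ZMod m) : Lm K m := algebraMap K (Lm K m) (F n)

/-- `X_n = F_n / (y_n y_{n+1})`. -/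
def Xv (n : ZMod m) : Lm K m := Fc K m F n / (yv K m n * yv K m (n + 1))

/-- `P_n = 1 + ∑_{k=0}^{m-2} X_n X_{n-1} ⋯ X_{n-k}`. -/
def Pv (n : ZMod m) : Lm K m :=
  1 + ∑ k ∈ Finset.range (m - 1), ∏ j ∈ Finset.range (k + 1), Xv K m F (n - (j : ZMod m))

/-- `z_n = y_n (1 + X_n)`. -/
def zv (n : ZMod m) : Lm K m := yv K m n * (1 + Xv K m F n)

/-- `𝐲 = ∏_n y_n`. -/
def boldy : Lm K m := ∏ n : ZMod m, yv K m n

/-- `𝐅 = ∏_n F_n` (viewed in `L`). -/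
def boldF : Lm K m := ∏ n : ZMod m, Fc K m F n

/-- `δ = 𝐲 - 𝐅/𝐲`. -/
def deltav : Lm K m := boldy K m - boldF K m F / boldy K m

set_option linter.unusedSectionVars false
set_option linter.unusedVariables false

lemma yv_ne_zero (n : ZMod m) : yv K m n ≠ 0 := by
  rw [yv, map_ne_zero_iff _ (IsFractionRing.injective _ _)]
  exact MvPolynomial.X_ne_zero n

lemma Fc_ne_zero (hF : ∀ n, F n ≠ 0) (n : ZMod m) : Fc K m F n ≠ 0 := by
  rw [Fc, map_ne_zero_iff _ (algebraMap K (Lm K m)).injective]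
  exact hF n

lemma prod_zmod {β : Type} [CommMonoid β] (n : ZMod m) (f : ZMod m → β) :
    ∏ i : ZMod m, f i = ∏ j ∈ Finset.range m, f (n - (j : ZMod m)) := by
  apply Finset.prod_nbij' (fun i => (n - i).val) (fun j => n - (j : ZMod m))
  · intro a _; exact Finset.mem_range.mpr (ZMod.val_lt _)
  · intro a _; exact Finset.mem_univ _
  · intro a _; rw [ZMod.natCast_val, ZMod.cast_id]; ring
  · intro a ha
    have h : n - (n - (a:ZMod m)) = (a : ZMod m) := by ring
    rw [h, ZMod.val_natCast_of_lt (Finset.mem_range.mp ha)]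
  · intro a _; congr 1; rw [ZMod.natCast_val, ZMod.cast_id]; ring

lemma Xv_spec (n : ZMod m) : Xv K m F n * (yv K m n * yv K m (n + 1)) = Fc K m F n := by
  rw [Xv]
  field_simp [yv_ne_zero]

lemma claim5 (n : ZMod m) (k : ℕ) :
    (∏ j ∈ Finset.range (k+1), Xv K m F (n - (j:ZMod m))) *
      (yv K m (n+1) * yv K m (n - (k:ZMod m)) * ∏ j ∈ Finset.range k, yv K m (n - (j:ZMod m))^2) =
    ∏ j ∈ Finset.range (k+1), Fc K m F (n - (j:ZMod m)) := by
  induction k with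
  | zero =>
    simp only [zero_add, Finset.prod_range_one, Finset.prod_range_zero, Nat.cast_zero, sub_zero, mul_one]
    rw [mul_comm (yv K m (n+1))]
    exact Xv_spec K m F n
  | succ k ih =>
    rw [Finset.prod_range_succ, Finset.prod_range_succ (fun j => Fc K m F (n - (j:ZMod m))),
      Finset.prod_range_succ (fun j => yv K m (n - (j:ZMod m))^2)]
    push_cast
    have ha : Xv K m F (n - ((k:ZMod m)+1)) * (yv K m (n - ((k:ZMod m)+1)) * yv K m (n - (k:ZMod m)))
        = Fc K m F (n - ((k:ZMod m)+1)) := by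
      have := Xv_spec K m F (n - ((k:ZMod m)+1))
      rwa [show n - ((k:ZMod m)+1) + 1 = n - (k:ZMod m) by ring] at this
    calc ((∏ j ∈ Finset.range (k+1), Xv K m F (n - (j:ZMod m))) * Xv K m F (n - ((k:ZMod m)+1))) *
          (yv K m (n+1) * yv K m (n - ((k:ZMod m)+1)) *
            ((∏ j ∈ Finset.range k, yv K m (n - (j:ZMod m))^2) * yv K m (n - (k:ZMod m))^2))
        = ((∏ j ∈ Finset.range (k+1), Xv K m F (n - (j:ZMod m))) *
            (yv K m (n+1) * yv K m (n - (k:ZMod m)) * ∏ j ∈ Finset.range k, yv K m (n - (j:ZMod m))^2)) *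
          (Xv K m F (n - ((k:ZMod m)+1)) * (yv K m (n - ((k:ZMod m)+1)) * yv K m (n - (k:ZMod m)))) := by
          ring
      _ = (∏ j ∈ Finset.range (k+1), Fc K m F (n - (j:ZMod m))) * Fc K m F (n - ((k:ZMod m)+1)) := by
          rw [ih, ha]

lemma boldy_range (n : ZMod m) :
    boldy K m = ∏ j ∈ Finset.range m, yv K m (n - (j:ZMod m)) :=
  prod_zmod m n _

lemma cast_m_sub_one : (((m-1:ℕ)) : ZMod m) = -1 := by
  have h1 : 1 ≤ m := NeZero.one_le
  have := ZMod.natCast_self m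
  push_cast [Nat.cast_sub h1]
  simp [this]

lemma split6 (n : ZMod m) (k : ℕ) (hk : k < m - 1) :
    boldy K m ^ 2 =
      (yv K m (n+1) * yv K m (n - (k:ZMod m)) * ∏ j ∈ Finset.range k, yv K m (n - (j:ZMod m))^2) *
      (yv K m (n - (k:ZMod m)) * yv K m (n+1) *
        ∏ j ∈ Finset.Ico (k+1) (m-1), yv K m (n - (j:ZMod m))^2) := by
  have h1 : 1 ≤ m := NeZero.one_le
  have hsq : boldy K m ^ 2 = ∏ j ∈ Finset.range m, yv K m (n - (j:ZMod m))^2 := by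
    rw [boldy_range K m n, ← Finset.prod_pow]
  have hm1 : m = (m - 1) + 1 := by omega
  rw [hsq]
  rw [show (Finset.range m) = Finset.range ((m-1)+1) by rw [← hm1], Finset.prod_range_succ]
  have hsplit : ∏ j ∈ Finset.range (m-1), yv K m (n - (j:ZMod m))^2
      = (∏ j ∈ Finset.range (k+1), yv K m (n - (j:ZMod m))^2) *
        ∏ j ∈ Finset.Ico (k+1) (m-1), yv K m (n - (j:ZMod m))^2 := by
    rw [Finset.range_eq_Ico, ← Finset.prod_Ico_consecutive _ (Nat.zero_le (k+1)) (by omega),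
      ← Finset.range_eq_Ico]
  rw [hsplit, Finset.prod_range_succ]
  rw [show n - ((m-1:ℕ) : ZMod m) = n + 1 by rw [cast_m_sub_one]; ring]
  ring

lemma claim7 (n : ZMod m) (k : ℕ) (hk : k < m - 1) :
    (∏ j ∈ Finset.range (k+1), Xv K m F (n - (j:ZMod m))) * boldy K m ^ 2 =
    (∏ j ∈ Finset.range (k+1), Fc K m F (n - (j:ZMod m))) *
      (yv K m (n - (k:ZMod m)) * yv K m (n+1) *
        ∏ j ∈ Finset.Ico (k+1) (m-1), yv K m (n - (j:ZMod m))^2) := by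
  rw [split6 K m n k hk, ← mul_assoc, claim5]

def qP (n : ZMod m) : MvPolynomial (ZMod m) K :=
  (∏ i : ZMod m, MvPolynomial.X i)^2 +
    ∑ k ∈ Finset.range (m-1), (∏ j ∈ Finset.range (k+1), F (n - (j:ZMod m))) •
      (MvPolynomial.X (n - (k:ZMod m)) * MvPolynomial.X (n + 1) *
        ∏ j ∈ Finset.Ico (k+1) (m-1), MvPolynomial.X (n - (j:ZMod m))^2)

lemma algebraMap_smul_poly (c : K) (p : MvPolynomial (ZMod m) K) :
    algebraMap (MvPolynomial (ZMod m) K) (Lm K m) (c • p) =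
      algebraMap K (Lm K m) c * algebraMap (MvPolynomial (ZMod m) K) (Lm K m) p := by
  rw [MvPolynomial.smul_eq_C_mul, map_mul, IsScalarTower.algebraMap_apply K (MvPolynomial (ZMod m) K) (Lm K m) c,
    MvPolynomial.algebraMap_eq]

set_option maxHeartbeats 1000000 in
set_option synthInstance.maxHeartbeats 400000 in
lemma lemma8 (n : ZMod m) :
    Pv K m F n * boldy K m ^ 2 =
      algebraMap (MvPolynomial (ZMod m) K) (Lm K m) (qP K m F n) := by
  rw [Pv, qP, map_add, map_sum, add_mul, one_mul, Finset.sum_mul]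
  congr 1
  · rw [map_pow, map_prod, boldy]
    simp only [yv]
  · apply Finset.sum_congr rfl
    intro k hk
    rw [claim7 K m F n k (Finset.mem_range.mp hk), algebraMap_smul_poly]
    simp only [map_pow, Fc, yv, map_mul, map_prod]

lemma qP_ne_zero (hF : ∀ n, F n ≠ 0) (n : ZMod m) : qP K m F n ≠ 0 := by
  intro h
  have happ := congrArg (MvPolynomial.aeval (fun _ : ZMod m => (Polynomial.X : Polynomial K))) h
  rw [map_zero, qP, map_add, map_sum, map_pow, map_prod] at happ
  simp only [MvPolynomial.aeval_X] at happ
  have hterm : ∀ k ∈ Finset.range (m-1),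
      (MvPolynomial.aeval (fun _ : ZMod m => (Polynomial.X : Polynomial K)))
        (((∏ j ∈ Finset.range (k+1), F (n - (j:ZMod m))) •
          (MvPolynomial.X (n - (k:ZMod m)) * MvPolynomial.X (n + 1) *
            ∏ j ∈ Finset.Ico (k+1) (m-1), MvPolynomial.X (n - (j:ZMod m))^2) : MvPolynomial (ZMod m) K))
      = (∏ j ∈ Finset.range (k+1), F (n - (j:ZMod m))) • (Polynomial.X : Polynomial K)^(2 + 2*(m-1-(k+1))) := by
    intro k hk
    rw [map_smul, map_mul, map_mul, map_prod]
    simp only [map_pow, MvPolynomial.aeval_X]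
    rw [Finset.prod_const, Nat.card_Ico, pow_add, ← pow_mul]
    ring
  rw [Finset.sum_congr rfl hterm] at happ
  have hcoeff := congrArg (fun p => Polynomial.coeff p (2*m)) happ
  simp only [Polynomial.coeff_zero, Polynomial.coeff_add, Polynomial.finset_sum_coeff,
    Polynomial.coeff_smul, Finset.prod_const, Finset.card_univ, ZMod.card] at hcoeff
  rw [← pow_mul, Polynomial.coeff_X_pow, if_pos (Nat.mul_comm 2 m)] at hcoeff
  have hz : ∀ k ∈ Finset.range (m-1),
      (∏ j ∈ Finset.range (k+1), F (n - (j:ZMod m))) •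
        Polynomial.coeff ((Polynomial.X : Polynomial K)^(2 + 2*(m-1-(k+1)))) (2*m) = 0 := by
    intro k hk
    have hk' := Finset.mem_range.mp hk
    rw [Polynomial.coeff_X_pow, if_neg (by omega), smul_zero]
  rw [Finset.sum_congr rfl hz, Finset.sum_const, smul_zero] at hcoeff
  simp at hcoeff

lemma Pv_ne_zero (hF : ∀ n, F n ≠ 0) (n : ZMod m) : Pv K m F n ≠ 0 := by
  intro h
  have h8 := lemma8 K m F n
  rw [h, zero_mul] at h8
  have := (map_ne_zero_iff _ (IsFractionRing.injective (MvPolynomial (ZMod m) K) (Lm K m))).mpr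
    (qP_ne_zero K m F hF n)
  exact this h8.symm

def cX : Lm K m := ∏ i : ZMod m, Xv K m F i

lemma lemmaA (n : ZMod m) :
    Pv K m F n + cX K m F = 1 + Xv K m F n * Pv K m F (n - 1) := by
  have hm' : m - 1 + 1 = m := Nat.succ_pred_eq_of_pos (Nat.pos_of_ne_zero (NeZero.ne m))
  have hstep : ∀ k ∈ Finset.range (m-1),
      ∏ j ∈ Finset.range (k+1+1), Xv K m F (n - (j:ZMod m))
      = Xv K m F n * ∏ j ∈ Finset.range (k+1), Xv K m F ((n-1) - (j:ZMod m)) := by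
    intro k _
    rw [Finset.prod_range_succ' (fun j => Xv K m F (n - (j:ZMod m))) (k+1), mul_comm]
    congr 1
    · congr 1; simp
    · apply Finset.prod_congr rfl
      intro j _
      congr 1
      push_cast
      ring
  have hS := Finset.sum_range_succ (fun k => ∏ j ∈ Finset.range (k+1), Xv K m F (n - (j:ZMod m))) (m-1)
  rw [Finset.sum_range_succ' (fun k => ∏ j ∈ Finset.range (k+1), Xv K m F (n - (j:ZMod m))) (m-1)] at hS
  rw [Finset.sum_congr rfl hstep, ← Finset.mul_sum] at hS
  have hg0 : ∏ j ∈ Finset.range (0+1), Xv K m F (n - (j:ZMod m)) = Xv K m F n := by simp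
  rw [hg0] at hS
  have hgm : ∏ j ∈ Finset.range (m-1+1), Xv K m F (n - (j:ZMod m)) = cX K m F := by
    rw [hm', cX, prod_zmod m n (Xv K m F)]
  rw [hgm] at hS
  rw [Pv, Pv]
  linear_combination -hS

lemma lemmaB (n : ZMod m) :
    Xv K m F (n-1) * Pv K m F (n-2) + Pv K m F n = (1 + Xv K m F n) * Pv K m F (n-1) := by
  have hA1 := lemmaA K m F n
  have hA2 := lemmaA K m F (n-1)
  rw [show n - 1 - 1 = n - 2 by ring] at hA2
  linear_combination hA1 - hA2

lemma key (hF : ∀ n, F n ≠ 0) (n : ZMod m) :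
    Pv K m F (n - 2) * Fc K m F (n - 1) / (Pv K m F (n - 1) * yv K m (n - 1)) +
        Pv K m F n * yv K m n / Pv K m F (n - 1) =
      yv K m n + Fc K m F n / yv K m (n + 1) := by
  have hB := lemmaB K m F n
  have e1 : Fc K m F (n-1) = Xv K m F (n-1) * (yv K m (n-1) * yv K m n) := by
    rw [← Xv_spec K m F (n-1), show n - 1 + 1 = n by ring]
  have e2 : Fc K m F n = Xv K m F n * (yv K m n * yv K m (n+1)) := (Xv_spec K m F n).symm
  rw [e1, e2]
  have h1 := Pv_ne_zero K m F hF (n-1)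
  have h2 := yv_ne_zero K m (n-1)
  have h3 := yv_ne_zero K m n
  have h4 := yv_ne_zero K m (n+1)
  field_simp
  linear_combination hB

lemma zv_eq (n : ZMod m) : zv K m F n = yv K m n + Fc K m F n / yv K m (n+1) := by
  rw [zv, Xv]
  field_simp [yv_ne_zero]


set_option synthInstance.maxHeartbeats 1000000 in
set_option maxHeartbeats 1000000 in
/-- if `σ` is a `K`-algebra endomorphism of `L` with
`σ(y_n) = (P_{n-2}/P_{n-1})·(F_{n-1}/y_{n-1})` for all `n`, then `σ(z_n) = z_n` for all `n`;
equivalently `P_{n-2}F_{n-1}/(P_{n-1}y_{n-1}) + P_n y_n/P_{n-1} = y_n + F_n/y_{n+1}` in `L`. -/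
theorem stmt_14 (hm : 2 ≤ m) (hF : ∀ n, F n ≠ 0)
    (σ : Lm K m →ₐ[K] Lm K m)
    (hσ : ∀ n : ZMod m,
      σ (yv K m n) = Pv K m F (n - 2) / Pv K m F (n - 1) * (Fc K m F (n - 1) / yv K m (n - 1))) :
    (∀ n : ZMod m, σ (zv K m F n) = zv K m F n) ∧
      ∀ n : ZMod m,
        Pv K m F (n - 2) * Fc K m F (n - 1) / (Pv K m F (n - 1) * yv K m (n - 1)) +
            Pv K m F n * yv K m n / Pv K m F (n - 1) =
          yv K m n + Fc K m F n / yv K m (n + 1) := by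
  refine ⟨?_, fun n => key K m F hF n⟩
  intro n
  rw [zv_eq, map_add, map_div₀, hσ n, hσ (n+1)]
  have hc : σ (Fc K m F n) = Fc K m F n := by rw [Fc]; exact σ.commutes (F n)
  rw [hc, show n + 1 - 2 = n - 1 by ring, show n + 1 - 1 = n by ring]
  rw [← key K m F hF n]
  have h1 := Pv_ne_zero K m F hF (n-1)
  have h1' := Pv_ne_zero K m F hF n
  have h2 := yv_ne_zero K m (n-1)
  have h3 := yv_ne_zero K m n
  have h5 := Fc_ne_zero K m F hF n
  field_simp
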